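/- Let U be a bounded open set in ℝ^d, let n be a positive integer, and let γ ∈ (0,1]. Then ℱ_n^γ(U) is nowhere dense in C(U̅); in particular it has empty interior. -/

import Mathlib

set_option maxHeartbeats 1000000


open Set Filter Topology

/-- `K_n`: the points of `U` at distance at least `1/n` from the boundary of `U`. -/
def Kset {d : ℕ} (U : Set (EuclideanSpace ℝ (Fin d))) (n : ℕ) :
    Set (EuclideanSpace ℝ (Fin d)) :=
  {u ∈ U | ∀ x ∈ frontier U, 1 / (n : ℝ) ≤ ‖u - x‖}

/-- `𝒞_n^γ(U)`: unit-speed `C¹` curves `c : [-1/n, 1/n] → U` whose derivative satisfies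
`‖c'(s₂) - c'(s₁)‖ ≤ n |s₂ - s₁|^γ` and whose image lies in `K_n`. -/
def CurveClass {d : ℕ} (U : Set (EuclideanSpace ℝ (Fin d))) (n : ℕ) (γ : ℝ) :
    Set (ℝ → EuclideanSpace ℝ (Fin d)) :=
  {c | ContDiffOn ℝ 1 c (Icc (-(1 / (n : ℝ))) (1 / n)) ∧
    (∀ s ∈ Icc (-(1 / (n : ℝ))) (1 / n),
      ‖derivWithin c (Icc (-(1 / (n : ℝ))) (1 / n)) s‖ = 1) ∧
    (∀ s₁ ∈ Icc (-(1 / (n : ℝ))) (1 / n), ∀ s₂ ∈ Icc (-(1 / (n : ℝ))) (1 / n),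
      ‖derivWithin c (Icc (-(1 / (n : ℝ))) (1 / n)) s₂ -
          derivWithin c (Icc (-(1 / (n : ℝ))) (1 / n)) s₁‖ ≤ (n : ℝ) * |s₂ - s₁| ^ γ) ∧
    ∀ s ∈ Icc (-(1 / (n : ℝ))) (1 / n), c s ∈ Kset U n}

open Classical in
/-- Extend a continuous function on `closure U` to all of `ℝ^d` by zero. -/
noncomputable def extendCl {d : ℕ} (U : Set (EuclideanSpace ℝ (Fin d)))
    (f : C(closure U, ℝ)) : EuclideanSpace ℝ (Fin d) → ℝ :=
  fun x => if hx : x ∈ closure U then f ⟨x, hx⟩ else 0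

/-- `ℱ_n^γ(U)`: those `f ∈ C(U̅)` such that for some curve `c ∈ 𝒞_n^γ(U)` one has
`|f (c s) - f (c 0)| ≤ n |s|` for all `s ∈ [-1/n, 1/n]`. -/
def Fclass {d : ℕ} (U : Set (EuclideanSpace ℝ (Fin d))) (n : ℕ) (γ : ℝ) :
    Set C(closure U, ℝ) :=
  {f | ∃ c ∈ CurveClass U n γ, ∀ s ∈ Icc (-(1 / (n : ℝ))) (1 / n),
    |extendCl U f (c s) - extendCl U f (c 0)| ≤ (n : ℝ) * |s|}

open RealInnerProductSpace

/-- cosine is 1-Lipschitz. -/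
theorem mycosLip (x y : ℝ) : |Real.cos x - Real.cos y| ≤ |x - y| := by
  rw [Real.cos_sub_cos]
  have h1 : |Real.sin ((x+y)/2)| ≤ 1 := Real.abs_sin_le_one _
  have h2 : |Real.sin ((x-y)/2)| ≤ |(x-y)/2| := Real.abs_sin_le_abs
  calc |(-2) * Real.sin ((x+y)/2) * Real.sin ((x-y)/2)|
      = 2 * (|Real.sin ((x+y)/2)| * |Real.sin ((x-y)/2)|) := by
        rw [abs_mul, abs_mul]; ring_nf
    _ ≤ 2 * (1 * |(x-y)/2|) := by gcongr
    _ = |x - y| := by rw [abs_div]; norm_num; ring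

/-- A finite `1/2`-net on the unit sphere. -/
theorem mynet {E : Type*} [NormedAddCommGroup E] [InnerProductSpace ℝ E] [ProperSpace E] :
    ∃ (m : ℕ) (e : Fin m → E), (∀ k, ‖e k‖ = 1) ∧
      ∀ v : E, ‖v‖ = 1 → ∃ k, ‖v - e k‖ < 1/2 := by
  have hc := isCompact_sphere (0:E) 1
  obtain ⟨t, ht⟩ := hc.elim_finite_subcover
    (fun i : Metric.sphere (0:E) 1 => Metric.ball (i:E) (1/2))
    (fun i => Metric.isOpen_ball)
    (fun v hv => Set.mem_iUnion.2 ⟨⟨v, hv⟩, by simp [Metric.mem_ball]⟩)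
  refine ⟨t.card, fun k => ((t.equivFin.symm k : t) : Metric.sphere (0:E) 1),
    fun k => mem_sphere_zero_iff_norm.mp ((t.equivFin.symm k : t) : Metric.sphere (0:E) 1).2, ?_⟩
  intro v hv
  have := ht (mem_sphere_zero_iff_norm.mpr hv)
  simp only [Set.mem_iUnion] at this
  obtain ⟨i, hi, hmem⟩ := this
  refine ⟨t.equivFin ⟨i, hi⟩, ?_⟩
  have h2 : (((t.equivFin.symm (t.equivFin ⟨i, hi⟩) : t)) : Metric.sphere (0:E) 1) = i := by simp
  show ‖v - (((t.equivFin.symm (t.equivFin ⟨i, hi⟩) : t)) : Metric.sphere (0:E) 1)‖ < 1/2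
  rw [h2]
  simpa [Metric.mem_ball, dist_eq_norm] using hmem

/-- Arithmetic: cross-scale bound for indices `p < q`. -/
theorem myarith_lt {M r ρ a ℓ0 : ℝ} (hM1 : 1 ≤ M) (hrdef : r = 1/(64*M))
    (hρdef : ρ = r/(256*M)) (ha : 0 < a) (hℓ0 : 0 < ℓ0) (p q : ℕ) (hpq : p < q) :
    a * r^(p+1) * (8*Real.pi/(ℓ0 * ρ^p)) * (ℓ0 * ρ^q) ≤ a * r^(q+1) / (8*M) := by
  have hM0 : (0:ℝ) < M := by linarith
  have hr : 0 < r := by rw [hrdef]; positivity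
  have hρ : 0 < ρ := by rw [hρdef]; positivity
  obtain ⟨k, rfl⟩ : ∃ k, q = p + k + 1 := ⟨q - p - 1, by omega⟩
  have hπ0 := Real.pi_pos
  have hπ4 := Real.pi_le_four
  have hL : a * r^(p+1) * (8*Real.pi/(ℓ0 * ρ^p)) * (ℓ0 * ρ^(p+k+1))
      = 8*Real.pi * (a * r^(p+1)) * ρ^(k+1) := by
    have : ρ^(p+k+1) = ρ^p * ρ^(k+1) := by rw [← pow_add]; ring_nf
    rw [this]; field_simp
  have hR : a * r^(p+k+1+1) / (8*M) = (a * r^(p+1)) * (r^(k+1) / (8*M)) := by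
    have : r^(p+k+1+1) = r^(p+1) * r^(k+1) := by rw [← pow_add]; ring_nf
    rw [this]; ring
  rw [hL, hR]
  have hkey : 8*Real.pi * ρ^(k+1) ≤ r^(k+1) / (8*M) := by
    have hρsplit : ρ^(k+1) = r^(k+1) * (1/(256*M))^(k+1) := by
      rw [← mul_pow]; congr 1; rw [hρdef]; ring
    rw [hρsplit]
    have h1 : (1/(256*M))^(k+1) ≤ 1/(256*M) := by
      have := pow_le_pow_of_le_one (by positivity : (0:ℝ) ≤ 1/(256*M))
        (by rw [div_le_one (by positivity)]; linarith : (1:ℝ)/(256*M) ≤ 1)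
        (by omega : 1 ≤ k+1)
      simpa using this
    have hrk : (0:ℝ) < r^(k+1) := by positivity
    calc 8*Real.pi * (r^(k+1) * (1/(256*M))^(k+1))
        ≤ 8*4 * (r^(k+1) * (1/(256*M))) := by
          gcongr
      _ = r^(k+1) * (32/(256*M)) := by ring
      _ ≤ r^(k+1) / (8*M) := by
          rw [div_eq_mul_inv (r^(k+1))]
          gcongr
          rw [div_le_iff₀ (by positivity : (0:ℝ) < 256*M)]
          have h32 : (8*M)⁻¹ * (256*M) = 32 := by field_simp; ring
          rw [h32]
  calc 8*Real.pi * (a * r^(p+1)) * ρ^(k+1)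
      = (a * r^(p+1)) * (8*Real.pi * ρ^(k+1)) := by ring
    _ ≤ (a * r^(p+1)) * (r^(k+1) / (8*M)) := by
        have : (0:ℝ) < a * r^(p+1) := by positivity
        exact mul_le_mul_of_nonneg_left hkey this.le

/-- Arithmetic: amplitude bound for indices `q > p`. -/
theorem myarith_gt {M r a : ℝ} (hM1 : 1 ≤ M) (hrdef : r = 1/(64*M)) (ha : 0 < a)
    (p q : ℕ) (hpq : p < q) :
    2 * (a * r^(q+1)) ≤ a * r^(p+1) / (8*M) := by
  have hM0 : (0:ℝ) < M := by linarith
  have hr : 0 < r := by rw [hrdef]; positivity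
  have hr1 : r ≤ 1 := by rw [hrdef, div_le_one (by positivity)]; linarith
  obtain ⟨k, rfl⟩ : ∃ k, q = p + k + 1 := ⟨q - p - 1, by omega⟩
  have hsplit : r^(p+k+1+1) = r^(p+1) * r^(k+1) := by rw [← pow_add]; ring_nf
  rw [hsplit]
  have h1 : r^(k+1) ≤ r := by
    have := pow_le_pow_of_le_one hr.le hr1 (by omega : 1 ≤ k+1)
    simpa using this
  have h2 : 2 * r ≤ 1/(8*M) := by
    rw [hrdef, mul_one_div, div_le_div_iff₀ (by positivity : (0:ℝ) < 64*M) (by positivity : (0:ℝ) < 8*M)]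
    nlinarith
  calc 2 * (a * (r^(p+1) * r^(k+1))) = (a * r^(p+1)) * (2 * r^(k+1)) := by ring
    _ ≤ (a * r^(p+1)) * (2 * r) := by
        have : (0:ℝ) < a * r^(p+1) := by positivity
        apply mul_le_mul_of_nonneg_left _ this.le
        linarith
    _ ≤ (a * r^(p+1)) * (1/(8*M)) := by
        have : (0:ℝ) < a * r^(p+1) := by positivity
        exact mul_le_mul_of_nonneg_left h2 this.le
    _ = a * r^(p+1) / (8*M) := by ring

/-- `ℱ_n^γ(U)` is nowhere dense in `C(U̅)`; in particular it has empty interior. -/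
theorem fclass_isNowhereDense {d : ℕ} (U : Set (EuclideanSpace ℝ (Fin d))) (hU : IsOpen U)
    (hUb : Bornology.IsBounded U) (n : ℕ) (hn : 0 < n) (γ : ℝ) (hγ : γ ∈ Ioc (0 : ℝ) 1) :
    IsNowhereDense (Fclass U n γ) ∧ interior (Fclass U n γ) = ∅ := by
  classical
  haveI : CompactSpace (closure U) := isCompact_iff_compactSpace.mp
    (Metric.isCompact_of_isClosed_isBounded isClosed_closure hUb.closure)
  have main : ∀ f : C(closure U, ℝ), ∀ ε : ℝ, 0 < ε → ∃ g : C(closure U, ℝ),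
      dist g f < ε ∧ ∃ δ : ℝ, 0 < δ ∧ ∀ f' ∈ Fclass U n γ, δ ≤ dist f' g := by
    intro f ε hε
    obtain ⟨m, e, he1, hnet⟩ := mynet (E := EuclideanSpace ℝ (Fin d))
    have hn0 : (0:ℝ) < n := Nat.cast_pos.mpr hn
    have hinv : (0:ℝ) < 1/(n:ℝ) := by positivity
    have hγ0 : (0:ℝ) < γ := hγ.1
    set M : ℝ := (m:ℝ) + 1 with hM
    have hM1 : (1:ℝ) ≤ M := by
      rw [hM]; have : (0:ℝ) ≤ (m:ℝ) := Nat.cast_nonneg m; linarith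
    have hM0 : (0:ℝ) < M := by linarith
    have hmM : (m:ℝ) ≤ M := by rw [hM]; linarith
    set a : ℝ := ε/2 with ha'
    have ha : 0 < a := by rw [ha']; positivity
    set r : ℝ := 1/(64*M) with hr'
    have hr : 0 < r := by rw [hr']; positivity
    have hr1 : r ≤ 1 := by rw [hr', div_le_one (by positivity)]; linarith
    set ρ : ℝ := r/(256*M) with hρ'
    have hρ : 0 < ρ := by rw [hρ']; positivity
    have hρr : ρ ≤ r := by
      rw [hρ']
      calc r/(256*M) ≤ r/1 := by
            apply div_le_div_of_nonneg_left hr.le one_pos ?_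
            linarith
        _ = r := div_one r
    have hρ1 : ρ ≤ 1 := hρr.trans hr1
    set A : ℕ → ℝ := fun i => a * r^(i+1) with hA'
    have hA : ∀ i, 0 < A i := fun i => by rw [hA']; positivity
    set δ : ℝ := a * r^(m+1)/8 with hδ'
    have hδ : 0 < δ := by rw [hδ']; positivity
    have hδA : ∀ i : ℕ, i < m → δ ≤ A i / 8 := by
      intro i him
      rw [hδ', hA']
      have h1 : r^(m+1) ≤ r^(i+1) := pow_le_pow_of_le_one hr.le hr1 (by omega)
      have h2 := mul_le_mul_of_nonneg_left h1 ha.le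
      linarith
    obtain ⟨η, hη, hfUC⟩ := Metric.uniformContinuous_iff.mp
      (CompactSpace.uniformContinuous_of_continuous f.continuous) δ hδ
    set ℓbar : ℝ := η/2 with hℓbar'
    have hℓbarpos : 0 < ℓbar := by rw [hℓbar']; positivity
    set ℓstar : ℝ := (1/(4*(n:ℝ))) ^ ((1:ℝ)/γ) with hℓstar'
    have hℓstar : 0 < ℓstar := by
      rw [hℓstar']; exact Real.rpow_pos_of_pos (by positivity) _
    set ℓ0 : ℝ := min (min (1/(n:ℝ)) ℓstar) (min ℓbar (a*r/(8*(n:ℝ)))) with hℓ0'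
    have hℓ0 : 0 < ℓ0 := by
      rw [hℓ0']
      apply lt_min (lt_min hinv hℓstar) (lt_min hℓbarpos (by positivity))
    have hℓ0inv : ℓ0 ≤ 1/(n:ℝ) := le_trans (min_le_left _ _) (min_le_left _ _)
    have hℓ0star : ℓ0 ≤ ℓstar := le_trans (min_le_left _ _) (min_le_right _ _)
    have hℓ0bar : ℓ0 ≤ ℓbar := le_trans (min_le_right _ _) (min_le_left _ _)
    have hℓ0ar : ℓ0 ≤ a*r/(8*(n:ℝ)) := le_trans (min_le_right _ _) (min_le_right _ _)
    set ℓ : ℕ → ℝ := fun i => ℓ0 * ρ^i with hℓ'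
    have hℓpos : ∀ i, 0 < ℓ i := fun i => by rw [hℓ']; positivity
    have hℓle : ∀ i, ℓ i ≤ ℓ0 := by
      intro i
      rw [hℓ']
      calc ℓ0 * ρ^i ≤ ℓ0 * 1 := by
            apply mul_le_mul_of_nonneg_left (pow_le_one₀ hρ.le hρ1) hℓ0.le
        _ = ℓ0 := mul_one _
    set ω : ℕ → ℝ := fun i => 8*Real.pi/(ℓ i) with hω'
    have hω : ∀ i, 0 < ω i := fun i => by
      rw [hω']; exact div_pos (by positivity) (hℓpos i)
    have hnℓ : ∀ i : ℕ, (n:ℝ) * ℓ i ≤ A i / 8 := by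
      intro i
      have h1 : ρ^i ≤ r^i := pow_le_pow_left₀ hρ.le hρr i
      have h2 : (n:ℝ) * ℓ0 ≤ a * r / 8 := by
        calc (n:ℝ)*ℓ0 ≤ (n:ℝ)*(a*r/(8*(n:ℝ))) := mul_le_mul_of_nonneg_left hℓ0ar hn0.le
          _ = a*r/8 := by field_simp
      rw [hℓ', hA']
      calc (n:ℝ) * (ℓ0 * ρ^i) = ((n:ℝ)*ℓ0) * ρ^i := by ring
        _ ≤ (a*r/8) * r^i := by
            apply mul_le_mul h2 h1 (by positivity) (by positivity)
        _ = a * r^(i+1) / 8 := by rw [pow_succ]; ring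
    have hrp : ∀ s : ℝ, 0 ≤ s → s ≤ ℓ0 → (n:ℝ) * s ^ γ ≤ 1/4 := by
      intro s h0s hsℓ
      have h1 : s ^ γ ≤ ℓstar ^ γ :=
        Real.rpow_le_rpow h0s (le_trans hsℓ hℓ0star) hγ0.le
      have h2 : ℓstar ^ γ = 1/(4*(n:ℝ)) := by
        rw [hℓstar', ← Real.rpow_mul (by positivity), one_div_mul_cancel hγ0.ne',
          Real.rpow_one]
      calc (n:ℝ)*s^γ ≤ (n:ℝ) * (1/(4*(n:ℝ))) :=
            mul_le_mul_of_nonneg_left (h2 ▸ h1) hn0.le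
        _ = 1/4 := by field_simp
    have hcont : Continuous fun x : closure U =>
        ∑ i : Fin m, A i * Real.cos (ω i * ⟪(x : EuclideanSpace ℝ (Fin d)), e i⟫) := by
      apply continuous_finset_sum
      intro i _
      exact continuous_const.mul (Real.continuous_cos.comp (continuous_const.mul
        (Continuous.inner continuous_subtype_val continuous_const)))
    set g : C(closure U, ℝ) := f + ⟨_, hcont⟩ with hg'
    have hgapp : ∀ (x : EuclideanSpace ℝ (Fin d)) (hx : x ∈ closure U),
        g ⟨x, hx⟩ = f ⟨x, hx⟩ + ∑ i : Fin m, A i * Real.cos (ω i * ⟪x, e i⟫) :=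
      fun x hx => rfl
    have hdistgf : dist g f < ε := by
      have hle : dist g f ≤ a := by
        rw [ContinuousMap.dist_le ha.le]
        intro x
        have hx1 : g x - f x = ∑ i : Fin m, A i * Real.cos
            (ω i * ⟪(x : EuclideanSpace ℝ (Fin d)), e i⟫) := by
          rw [hg']; simp [ContinuousMap.add_apply]
        rw [Real.dist_eq, hx1]
        calc |∑ i : Fin m, A i * Real.cos (ω i * ⟪(x : EuclideanSpace ℝ (Fin d)), e i⟫)|
            ≤ ∑ i : Fin m, |A i * Real.cos (ω i * ⟪(x : EuclideanSpace ℝ (Fin d)), e i⟫)| :=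
              Finset.abs_sum_le_sum_abs _ _
          _ ≤ (Finset.univ : Finset (Fin m)).card • (a*r) := by
              apply Finset.sum_le_card_nsmul
              intro i _
              rw [abs_mul, abs_of_pos (hA i)]
              calc A i * |Real.cos (ω i * ⟪(x : EuclideanSpace ℝ (Fin d)), e i⟫)|
                  ≤ A i * 1 := mul_le_mul_of_nonneg_left (Real.abs_cos_le_one _) (hA i).le
                _ = A i := mul_one _
                _ ≤ a * r := by
                    rw [hA']
                    calc a * r^(i+(1:ℕ)) ≤ a * r^1 :=
                        mul_le_mul_of_nonneg_left
                          (pow_le_pow_of_le_one hr.le hr1 (by omega)) ha.le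
                      _ = a * r := by rw [pow_one]
          _ ≤ a := by
              rw [Finset.card_univ, Fintype.card_fin, nsmul_eq_mul]
              calc (m:ℝ) * (a*r) ≤ M * (a*r) := mul_le_mul_of_nonneg_right hmM (by positivity)
                _ = a * (M * r) := by ring
                _ ≤ a * 1 := by
                    apply mul_le_mul_of_nonneg_left ?_ ha.le
                    rw [hr']
                    rw [mul_one_div, div_le_one (by positivity)]
                    linarith
                _ = a := mul_one _
      rw [ha'] at hle
      linarith
    refine ⟨g, hdistgf, δ, hδ, ?_⟩
    intro f' hf'
    by_contra hcon
    push_neg at hcon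
    obtain ⟨c, hcC, hcf⟩ := hf'
    obtain ⟨hc1, hc2, hc3, hc4⟩ := hcC
    set I : Set ℝ := Icc (-(1/(n:ℝ))) (1/(n:ℝ)) with hI
    have h0I : (0:ℝ) ∈ I := by
      rw [hI]; constructor
      · linarith
      · linarith
    have hmem : ∀ s ∈ I, c s ∈ closure U := fun s hs => subset_closure (hc4 s hs).1
    have hdiffc : DifferentiableOn ℝ c I := hc1.differentiableOn one_ne_zero
    have hder : ∀ s ∈ I, HasDerivWithinAt c (derivWithin c I s) I s :=
      fun s hs => (hdiffc s hs).hasDerivWithinAt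
    have hLip : ∀ u ∈ I, ∀ v ∈ I, ‖c v - c u‖ ≤ |v - u| := by
      intro u hu v hv
      have hcic : Convex ℝ I := by rw [hI]; exact convex_Icc _ _
      have := hcic.norm_image_sub_le_of_norm_hasDerivWithin_le hder
        (fun s hs => (hc2 s hs).le) hu hv
      simpa [Real.norm_eq_abs] using this
    set e0 := derivWithin c I 0 with he0'
    have he0 : ‖e0‖ = 1 := hc2 0 h0I
    obtain ⟨j, hj⟩ := hnet e0 he0
    have hip : (7:ℝ)/8 ≤ ⟪e0, e j⟫ := by
      have h1 := norm_sub_sq_real e0 (e j)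
      nlinarith [norm_nonneg (e0 - e j), he1 j, hj]
    set ℓj := ℓ (j:ℕ) with hℓj'
    have hℓjpos : 0 < ℓj := hℓpos _
    have hℓjle : ℓj ≤ ℓ0 := hℓle _
    have hℓj_inv : ℓj ≤ 1/(n:ℝ) := le_trans hℓjle hℓ0inv
    have hsubI : Icc (0:ℝ) ℓj ⊆ I := by
      rw [hI]; exact Icc_subset_Icc (by linarith) hℓj_inv
    have hclose : ∀ s ∈ Icc (0:ℝ) ℓj, ‖derivWithin c I s - e0‖ ≤ 1/4 := by
      intro s hs
      have h3 := hc3 0 h0I s (hsubI hs)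
      rw [sub_zero] at h3
      have h4 : (n:ℝ) * |s| ^ γ ≤ 1/4 := by
        rw [abs_of_nonneg hs.1]
        exact hrp s hs.1 (le_trans hs.2 hℓjle)
      exact le_trans h3 h4
    have hF : ∀ s ∈ Icc (0:ℝ) ℓj, HasDerivWithinAt (fun t => c t - t • e0)
        (derivWithin c I s - e0) (Icc (0:ℝ) ℓj) s := by
      intro s hs
      have h5 := (hder s (hsubI hs)).mono hsubI
      have h6 : HasDerivWithinAt (fun t : ℝ => t • e0) e0 (Icc (0:ℝ) ℓj) s := by
        simpa using (hasDerivWithinAt_id s (Icc (0:ℝ) ℓj)).smul_const e0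
      exact h5.sub h6
    have hMVT := (convex_Icc (0:ℝ) ℓj).norm_image_sub_le_of_norm_hasDerivWithin_le hF hclose
      (left_mem_Icc.mpr hℓjpos.le) (right_mem_Icc.mpr hℓjpos.le)
    have hdev : ‖c ℓj - c 0 - ℓj • e0‖ ≤ ℓj/4 := by
      have h7 : c ℓj - ℓj • e0 - (c 0 - (0:ℝ) • e0) = c ℓj - c 0 - ℓj • e0 := by
        rw [zero_smul]; abel
      rw [h7] at hMVT
      calc ‖c ℓj - c 0 - ℓj • e0‖ ≤ 1/4 * ‖ℓj - 0‖ := hMVT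
        _ = ℓj/4 := by rw [sub_zero, Real.norm_eq_abs, abs_of_nonneg hℓjpos.le]; ring
    have hproj : ℓj/2 ≤ ⟪c ℓj - c 0, e j⟫ := by
      have h5 : ⟪c ℓj - c 0, e j⟫ = ⟪c ℓj - c 0 - ℓj • e0, e j⟫ + ℓj * ⟪e0, e j⟫ := by
        simp only [inner_sub_left, real_inner_smul_left]; ring
      have h6 : |⟪c ℓj - c 0 - ℓj • e0, e j⟫| ≤ ℓj/4 := by
        have h8 := abs_real_inner_le_norm (c ℓj - c 0 - ℓj • e0) (e j)
        rw [he1 j, mul_one] at h8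
        exact h8.trans hdev
      have h7 := abs_le.mp h6
      nlinarith [hℓjpos]
    set ψ : ℝ → ℝ := fun s => ω (j:ℕ) * ⟪c s, e j⟫ with hψ'
    have hψcont : ContinuousOn ψ (Icc (0:ℝ) ℓj) := by
      rw [hψ']
      apply ContinuousOn.mul continuousOn_const
      exact ContinuousOn.inner (hc1.continuousOn.mono hsubI) continuousOn_const
    have hπ := Real.pi_pos
    have hgap : ψ 0 + 2*Real.pi ≤ ψ ℓj := by
      have h8 : ψ ℓj - ψ 0 = ω (j:ℕ) * ⟪c ℓj - c 0, e j⟫ := by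
        simp only [hψ', inner_sub_left]; ring
      have h9 : ω (j:ℕ) * (ℓj/2) ≤ ω (j:ℕ) * ⟪c ℓj - c 0, e j⟫ :=
        mul_le_mul_of_nonneg_left hproj (hω _).le
      have h10 : ω (j:ℕ) * (ℓj/2) = 4*Real.pi := by
        rw [hω']
        show 8*Real.pi/(ℓ (j:ℕ)) * (ℓj/2) = 4*Real.pi
        rw [← hℓj']
        field_simp
        ring
      linarith
    have hIVT := intermediate_value_Icc hℓjpos.le hψcont
    obtain ⟨s₁, hs₁mem, hψs₁⟩ : ∃ s ∈ Icc (0:ℝ) ℓj, Real.cos (ψ s) = 1 := by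
      set k : ℤ := ⌈ψ 0 / (2*Real.pi)⌉ with hk'
      have h11 := Int.le_ceil (ψ 0 / (2*Real.pi))
      have h11b := mul_le_mul_of_nonneg_right h11 (by positivity : (0:ℝ) ≤ 2*Real.pi)
      rw [div_mul_cancel₀ _ (by positivity : (2*Real.pi) ≠ 0)] at h11b
      have h12 := Int.ceil_lt_add_one (ψ 0 / (2*Real.pi))
      have h12b := mul_lt_mul_of_pos_right h12 (by positivity : (0:ℝ) < 2*Real.pi)
      rw [add_mul, div_mul_cancel₀ _ (by positivity : (2*Real.pi) ≠ 0), one_mul] at h12b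
      have hmemIcc : (k:ℝ) * (2*Real.pi) ∈ Icc (ψ 0) (ψ ℓj) := ⟨h11b, by linarith⟩
      obtain ⟨s, hs, hψs⟩ := hIVT hmemIcc
      exact ⟨s, hs, by rw [hψs]; exact Real.cos_int_mul_two_pi k⟩
    obtain ⟨s₂, hs₂mem, hψs₂⟩ : ∃ s ∈ Icc (0:ℝ) ℓj, Real.cos (ψ s) = -1 := by
      set k : ℤ := ⌈(ψ 0 - Real.pi) / (2*Real.pi)⌉ with hk'
      have h11 := Int.le_ceil ((ψ 0 - Real.pi) / (2*Real.pi))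
      have h11b := mul_le_mul_of_nonneg_right h11 (by positivity : (0:ℝ) ≤ 2*Real.pi)
      rw [div_mul_cancel₀ _ (by positivity : (2*Real.pi) ≠ 0)] at h11b
      have h12 := Int.ceil_lt_add_one ((ψ 0 - Real.pi) / (2*Real.pi))
      have h12b := mul_lt_mul_of_pos_right h12 (by positivity : (0:ℝ) < 2*Real.pi)
      rw [add_mul, div_mul_cancel₀ _ (by positivity : (2*Real.pi) ≠ 0), one_mul] at h12b
      have hmemIcc : (k:ℝ) * (2*Real.pi) + Real.pi ∈ Icc (ψ 0) (ψ ℓj) :=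
        ⟨by linarith, by linarith⟩
      obtain ⟨s, hs, hψs⟩ := hIVT hmemIcc
      exact ⟨s, hs, by rw [hψs]; exact Real.cos_int_mul_two_pi_add_pi k⟩
    have hs1I : s₁ ∈ I := hsubI hs₁mem
    have hs2I : s₂ ∈ I := hsubI hs₂mem
    have hm1 : c s₁ ∈ closure U := hmem s₁ hs1I
    have hm2 : c s₂ ∈ closure U := hmem s₂ hs2I
    have hm0 : c 0 ∈ closure U := hmem 0 h0I
    have hcos1 : Real.cos (ω (j:ℕ) * ⟪c s₁, e j⟫) = 1 := hψs₁
    have hcos2 : Real.cos (ω (j:ℕ) * ⟪c s₂, e j⟫) = -1 := hψs₂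
    have hfvar : |f ⟨c s₁, hm1⟩ - f ⟨c s₂, hm2⟩| ≤ δ := by
      have hd : dist (⟨c s₁, hm1⟩ : closure U) (⟨c s₂, hm2⟩ : closure U) < η := by
        rw [Subtype.dist_eq, dist_eq_norm]
        have hll := hLip s₂ hs2I s₁ hs1I
        have habs : |s₁ - s₂| ≤ ℓj := by
          rw [abs_sub_le_iff]
          constructor
          · linarith [hs₁mem.2, hs₂mem.1]
          · linarith [hs₂mem.2, hs₁mem.1]
        calc ‖c s₁ - c s₂‖ ≤ |s₁ - s₂| := hll
          _ ≤ ℓj := habs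
          _ ≤ ℓ0 := hℓjle
          _ ≤ ℓbar := hℓ0bar
          _ < η := by rw [hℓbar']; linarith
      have hdd := hfUC hd
      rw [Real.dist_eq] at hdd
      exact hdd.le
    have hother : ∀ i : Fin m, i ≠ j →
        |A (i:ℕ) * Real.cos (ω (i:ℕ) * ⟪c s₁, e i⟫) -
          A (i:ℕ) * Real.cos (ω (i:ℕ) * ⟪c s₂, e i⟫)| ≤ A (j:ℕ) / (8*M) := by
      intro i hij
      have hijn : (i:ℕ) ≠ (j:ℕ) := fun hcc => hij (Fin.ext hcc)
      have hdist12 : ‖c s₁ - c s₂‖ ≤ ℓj := by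
        have hll := hLip s₂ hs2I s₁ hs1I
        have habs : |s₁ - s₂| ≤ ℓj := by
          rw [abs_sub_le_iff]
          constructor
          · linarith [hs₁mem.2, hs₂mem.1]
          · linarith [hs₂mem.2, hs₁mem.1]
        exact hll.trans habs
      rcases lt_or_gt_of_ne hijn with hlt | hgt
      · have hcd : |Real.cos (ω (i:ℕ) * ⟪c s₁, e i⟫) - Real.cos (ω (i:ℕ) * ⟪c s₂, e i⟫)|
            ≤ ω (i:ℕ) * ℓj := by
          refine (mycosLip _ _).trans ?_
          rw [← mul_sub, abs_mul, abs_of_pos (hω (i:ℕ)), ← inner_sub_left]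
          have h5 : |⟪c s₁ - c s₂, e i⟫| ≤ ‖c s₁ - c s₂‖ := by
            have h8 := abs_real_inner_le_norm (c s₁ - c s₂) (e i)
            rw [he1 i, mul_one] at h8
            exact h8
          exact mul_le_mul_of_nonneg_left (h5.trans hdist12) (hω (i:ℕ)).le
        calc |A (i:ℕ) * Real.cos (ω (i:ℕ) * ⟪c s₁, e i⟫) -
              A (i:ℕ) * Real.cos (ω (i:ℕ) * ⟪c s₂, e i⟫)|
            = A (i:ℕ) * |Real.cos (ω (i:ℕ) * ⟪c s₁, e i⟫) -
                Real.cos (ω (i:ℕ) * ⟪c s₂, e i⟫)| := by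
              rw [← mul_sub, abs_mul, abs_of_pos (hA (i:ℕ))]
          _ ≤ A (i:ℕ) * (ω (i:ℕ) * ℓj) := mul_le_mul_of_nonneg_left hcd (hA (i:ℕ)).le
          _ = a * r^((i:ℕ)+1) * (8*Real.pi/(ℓ0 * ρ^(i:ℕ))) * (ℓ0 * ρ^(j:ℕ)) := by
              rw [hA', hω', hℓ', hℓj', hℓ']; ring
          _ ≤ a * r^((j:ℕ)+1) / (8*M) := myarith_lt hM1 hr' hρ' ha hℓ0 (i:ℕ) (j:ℕ) hlt
          _ = A (j:ℕ) / (8*M) := by rw [hA']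
      · have hb1 : |Real.cos (ω (i:ℕ) * ⟪c s₁, e i⟫)| ≤ 1 := Real.abs_cos_le_one _
        have hb2 : |Real.cos (ω (i:ℕ) * ⟪c s₂, e i⟫)| ≤ 1 := Real.abs_cos_le_one _
        calc |A (i:ℕ) * Real.cos (ω (i:ℕ) * ⟪c s₁, e i⟫) -
              A (i:ℕ) * Real.cos (ω (i:ℕ) * ⟪c s₂, e i⟫)|
            = A (i:ℕ) * |Real.cos (ω (i:ℕ) * ⟪c s₁, e i⟫) -
                Real.cos (ω (i:ℕ) * ⟪c s₂, e i⟫)| := by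
              rw [← mul_sub, abs_mul, abs_of_pos (hA (i:ℕ))]
          _ ≤ A (i:ℕ) * 2 := by
              apply mul_le_mul_of_nonneg_left ?_ (hA (i:ℕ)).le
              calc |Real.cos (ω (i:ℕ) * ⟪c s₁, e i⟫) - Real.cos (ω (i:ℕ) * ⟪c s₂, e i⟫)|
                  ≤ |Real.cos (ω (i:ℕ) * ⟪c s₁, e i⟫)| +
                    |Real.cos (ω (i:ℕ) * ⟪c s₂, e i⟫)| := abs_sub _ _
                _ ≤ 1 + 1 := add_le_add hb1 hb2
                _ = 2 := by norm_num
          _ = 2 * (a * r^((i:ℕ)+1)) := by rw [hA']; ring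
          _ ≤ a * r^((j:ℕ)+1) / (8*M) := myarith_gt hM1 hr' ha (j:ℕ) (i:ℕ) hgt
          _ = A (j:ℕ) / (8*M) := by rw [hA']
    have hsum : |∑ i ∈ Finset.univ.erase j,
        (A (i:ℕ) * Real.cos (ω (i:ℕ) * ⟪c s₁, e i⟫) -
          A (i:ℕ) * Real.cos (ω (i:ℕ) * ⟪c s₂, e i⟫))| ≤ A (j:ℕ) / 8 := by
      calc |∑ i ∈ Finset.univ.erase j,
            (A (i:ℕ) * Real.cos (ω (i:ℕ) * ⟪c s₁, e i⟫) -
              A (i:ℕ) * Real.cos (ω (i:ℕ) * ⟪c s₂, e i⟫))|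
          ≤ ∑ i ∈ Finset.univ.erase j,
            |A (i:ℕ) * Real.cos (ω (i:ℕ) * ⟪c s₁, e i⟫) -
              A (i:ℕ) * Real.cos (ω (i:ℕ) * ⟪c s₂, e i⟫)| :=
            Finset.abs_sum_le_sum_abs _ _
        _ ≤ (Finset.univ.erase j).card • (A (j:ℕ) / (8*M)) := by
            apply Finset.sum_le_card_nsmul
            intro i hi
            exact hother i (Finset.ne_of_mem_erase hi)
        _ ≤ A (j:ℕ) / 8 := by
            rw [nsmul_eq_mul]
            have hcard : (((Finset.univ.erase j).card : ℕ) : ℝ) ≤ M := by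
              have h9 : (Finset.univ.erase j).card ≤ (Finset.univ : Finset (Fin m)).card :=
                Finset.card_erase_le.trans le_rfl
              rw [Finset.card_univ, Fintype.card_fin] at h9
              calc (((Finset.univ.erase j).card : ℕ) : ℝ) ≤ (m:ℝ) := Nat.cast_le.mpr h9
                _ ≤ M := hmM
            have hpos : (0:ℝ) ≤ A (j:ℕ) / (8*M) := by positivity
            calc ((Finset.univ.erase j).card : ℝ) * (A (j:ℕ) / (8*M))
                ≤ M * (A (j:ℕ) / (8*M)) := mul_le_mul_of_nonneg_right hcard hpos
              _ = A (j:ℕ) / 8 := by field_simp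
    have hsplit : (∑ i : Fin m, A (i:ℕ) * Real.cos (ω (i:ℕ) * ⟪c s₁, e i⟫)) -
        (∑ i : Fin m, A (i:ℕ) * Real.cos (ω (i:ℕ) * ⟪c s₂, e i⟫))
        = (A (j:ℕ) * Real.cos (ω (j:ℕ) * ⟪c s₁, e j⟫) -
            A (j:ℕ) * Real.cos (ω (j:ℕ) * ⟪c s₂, e j⟫))
          + ∑ i ∈ Finset.univ.erase j,
            (A (i:ℕ) * Real.cos (ω (i:ℕ) * ⟪c s₁, e i⟫) -
              A (i:ℕ) * Real.cos (ω (i:ℕ) * ⟪c s₂, e i⟫)) := by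
      rw [← Finset.sum_sub_distrib]
      exact (Finset.add_sum_erase _ _ (Finset.mem_univ j)).symm
    have hδAj : δ ≤ A (j:ℕ) / 8 := hδA (j:ℕ) j.isLt
    have hG : g ⟨c s₁, hm1⟩ - g ⟨c s₂, hm2⟩ ≥ 7 * A (j:ℕ) / 4 := by
      rw [hgapp _ hm1, hgapp _ hm2]
      have hjterm : A (j:ℕ) * Real.cos (ω (j:ℕ) * ⟪c s₁, e j⟫) -
          A (j:ℕ) * Real.cos (ω (j:ℕ) * ⟪c s₂, e j⟫) = 2 * A (j:ℕ) := by
        rw [hcos1, hcos2]; ring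
      have h6 := abs_le.mp hfvar
      have h7 := abs_le.mp hsum
      have hAj := hA (j:ℕ)
      rw [hjterm] at hsplit
      linarith [hsplit]
    have hfg1 : |f' ⟨c s₁, hm1⟩ - g ⟨c s₁, hm1⟩| ≤ δ := by
      have h9 := ContinuousMap.dist_apply_le_dist (f := f') (g := g) (⟨c s₁, hm1⟩ : closure U)
      rw [Real.dist_eq] at h9
      exact h9.trans hcon.le
    have hfg2 : |f' ⟨c s₂, hm2⟩ - g ⟨c s₂, hm2⟩| ≤ δ := by
      have h9 := ContinuousMap.dist_apply_le_dist (f := f') (g := g) (⟨c s₂, hm2⟩ : closure U)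
      rw [Real.dist_eq] at h9
      exact h9.trans hcon.le
    have hcfP : ∀ s (hs : s ∈ I), |f' ⟨c s, hmem s hs⟩ - f' ⟨c 0, hm0⟩| ≤ (n:ℝ) * |s| := by
      intro s hs
      have h9 := hcf s hs
      simp only [extendCl] at h9
      rw [dif_pos (hmem s hs), dif_pos hm0] at h9
      exact h9
    have hP1 := hcfP s₁ hs1I
    have hP2 := hcfP s₂ hs2I
    have hns1 : (n:ℝ) * |s₁| ≤ A (j:ℕ) / 8 := by
      rw [abs_of_nonneg hs₁mem.1]
      calc (n:ℝ) * s₁ ≤ (n:ℝ) * ℓj := mul_le_mul_of_nonneg_left hs₁mem.2 hn0.le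
        _ ≤ A (j:ℕ) / 8 := hnℓ (j:ℕ)
    have hns2 : (n:ℝ) * |s₂| ≤ A (j:ℕ) / 8 := by
      rw [abs_of_nonneg hs₂mem.1]
      calc (n:ℝ) * s₂ ≤ (n:ℝ) * ℓj := mul_le_mul_of_nonneg_left hs₂mem.2 hn0.le
        _ ≤ A (j:ℕ) / 8 := hnℓ (j:ℕ)
    have habs1 := abs_le.mp (hP1.trans hns1)
    have habs2 := abs_le.mp (hP2.trans hns2)
    have hq1 := abs_le.mp hfg1
    have hq2 := abs_le.mp hfg2
    have hAj := hA (j:ℕ)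
    -- f' (c s₁) - f' (c s₂) ≥ 7A/4 - 2δ ≥ 7A/4 - A/4 = 3A/2, but also ≤ A/8 + A/8 = A/4
    linarith
  have hcl : IsNowhereDense (Fclass U n γ) := by
    rw [IsNowhereDense, eq_empty_iff_forall_notMem]
    intro f hf
    rw [mem_interior_iff_mem_nhds, Metric.mem_nhds_iff] at hf
    obtain ⟨ε, hε, hball⟩ := hf
    obtain ⟨g, hg, δ, hδ, havoid⟩ := main f ε hε
    have hgcl : g ∈ closure (Fclass U n γ) := hball (by simpa [Metric.mem_ball] using hg)
    obtain ⟨f', hf', hd⟩ := Metric.mem_closure_iff.mp hgcl δ hδ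
    rw [dist_comm] at hd
    exact absurd (havoid f' hf') (not_le.mpr hd)
  refine ⟨hcl, ?_⟩
  have hsub2 : interior (Fclass U n γ) ⊆ interior (closure (Fclass U n γ)) :=
    interior_mono subset_closure
  rw [IsNowhereDense] at hcl
  exact eq_empty_of_subset_empty (hcl ▸ hsub2)
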